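/- Fix x ∈ ℝ^d and t > 0. The map from ℝ^d to the continuous linear endomorphisms of ℝ^d sending p to the rank-one operator v ↦ exp(−‖x − p‖²/(4t)) · ⟨x − p, v⟩ · (x − p) (that is, p ↦ e^{−‖x−p‖²/(4t)} (x−p)(x−p)ᵀ) is Lipschitz with constant 8 e^{-1} √t with respect to the operator norm on endomorphisms. -/

import Mathlib

open Real ContinuousLinearMap

private lemma keyexp (s : ℝ) (hs : 0 ≤ s) :
    Real.exp (-s ^ 2) * (s + s ^ 3) ≤ 2 * Real.exp (-1) := by
  have h0 : (0:ℝ) < 1 + s ^ 2 := by positivity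
  have hw : (1 + s ^ 2) / 2 ≤ Real.exp (-((1 - s ^ 2) / 2)) := by
    have := Real.add_one_le_exp (-((1 - s ^ 2) / 2)); linarith
  have hE : Real.exp ((1 - s ^ 2) / 2) ≤ 2 / (1 + s ^ 2) := by
    rw [le_div_iff₀ h0]
    calc Real.exp ((1 - s ^ 2) / 2) * (1 + s ^ 2)
        = Real.exp ((1 - s ^ 2) / 2) * ((1 + s ^ 2) / 2) * 2 := by ring
      _ ≤ Real.exp ((1 - s ^ 2) / 2) * Real.exp (-((1 - s ^ 2) / 2)) * 2 := by
          have := mul_le_mul_of_nonneg_left hw (Real.exp_pos ((1 - s ^ 2) / 2)).le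
          nlinarith
      _ = 2 := by rw [← Real.exp_add]; simp
  have hsq : Real.exp (1 - s ^ 2) ≤ (2 / (1 + s ^ 2)) ^ 2 := by
    have h2 : Real.exp (1 - s ^ 2) = Real.exp ((1 - s ^ 2) / 2) ^ 2 := by
      rw [← Real.exp_nat_mul]; congr 1; push_cast; ring
    rw [h2]
    exact pow_le_pow_left₀ (Real.exp_pos _).le hE 2
  have hfin : (2 / (1 + s ^ 2)) ^ 2 * (s + s ^ 3) ≤ 2 := by
    rw [div_pow, div_mul_eq_mul_div, div_le_iff₀ (by positivity)]
    nlinarith [sq_nonneg (s - 1), sq_nonneg (s ^ 2 - s), sq_nonneg s]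
  have hdecomp : Real.exp (-s ^ 2) = Real.exp (-1) * Real.exp (1 - s ^ 2) := by
    rw [← Real.exp_add]; congr 1; ring
  rw [hdecomp]
  have h1 : Real.exp (1 - s ^ 2) * (s + s ^ 3) ≤ 2 := by
    calc Real.exp (1 - s ^ 2) * (s + s ^ 3) ≤ (2 / (1 + s ^ 2)) ^ 2 * (s + s ^ 3) := by
          apply mul_le_mul_of_nonneg_right hsq (by positivity)
      _ ≤ 2 := hfin
  calc Real.exp (-1) * Real.exp (1 - s ^ 2) * (s + s ^ 3)
      = Real.exp (-1) * (Real.exp (1 - s ^ 2) * (s + s ^ 3)) := by ring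
    _ ≤ Real.exp (-1) * 2 := mul_le_mul_of_nonneg_left h1 (Real.exp_pos _).le
    _ = 2 * Real.exp (-1) := by ring

private lemma key2 (r t : ℝ) (hr : 0 ≤ r) (ht : 0 < t) :
    Real.exp (-r ^ 2 / (4 * t)) * (2 * r + r ^ 3 / (2 * t)) ≤
      8 * Real.exp (-1) * Real.sqrt t := by
  set w := Real.sqrt t with hw
  have hst : 0 < w := Real.sqrt_pos.mpr ht
  have hst2 : w ^ 2 = t := Real.sq_sqrt ht.le
  rw [← hst2]
  set s := r / (2 * w) with hsdef
  have hs : 0 ≤ s := by positivity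
  have e1 : -r ^ 2 / (4 * w ^ 2) = -s ^ 2 := by
    rw [hsdef, div_pow, mul_pow]; ring
  have e2 : 2 * r + r ^ 3 / (2 * w ^ 2) = 4 * w * (s + s ^ 3) := by
    rw [hsdef]
    field_simp
    ring
  rw [e1, e2]
  calc Real.exp (-s ^ 2) * (4 * w * (s + s ^ 3))
      = 4 * w * (Real.exp (-s ^ 2) * (s + s ^ 3)) := by ring
    _ ≤ 4 * w * (2 * Real.exp (-1)) := by
        exact mul_le_mul_of_nonneg_left (keyexp s hs) (by positivity)
    _ = 8 * Real.exp (-1) * w := by ring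

local notation "Euc" d => EuclideanSpace ℝ (Fin d)

set_option maxHeartbeats 1000000 in
set_option synthInstance.maxHeartbeats 400000 in
theorem stmt11 (d : ℕ) (x : EuclideanSpace ℝ (Fin d)) (t : ℝ) (ht : 0 < t) :
    ∀ p q : EuclideanSpace ℝ (Fin d),
      ‖Real.exp (-‖x - p‖ ^ 2 / (4 * t)) • ((innerSL ℝ (x - p)).smulRight (x - p))
          - Real.exp (-‖x - q‖ ^ 2 / (4 * t)) • ((innerSL ℝ (x - q)).smulRight (x - q))‖
        ≤ 8 * Real.exp (-1 : ℝ) * Real.sqrt t * ‖p - q‖ := by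
  intro p q
  let f : (Euc d) → ((Euc d) →L[ℝ] (Euc d)) :=
    fun p => Real.exp (-‖x - p‖ ^ 2 / (4 * t)) • ((innerSL ℝ (x - p)).smulRight (x - p))
  have hB : IsBoundedBilinearMap ℝ
      (fun uv : (Euc d) × (Euc d) => (innerSL ℝ uv.1).smulRight uv.2) := by
    constructor
    · intro u₁ u₂ v; ext w; simp [inner_add_left, add_smul, add_mul]
    · intro c u v; ext w; simp [real_inner_smul_left, smul_smul, mul_assoc]
    · intro u v₁ v₂; ext w; simp [smul_add, mul_add]
    · intro c u v; ext w; simp [smul_smul, mul_comm]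
    · exact ⟨1, one_pos, fun u v => by
        rw [ContinuousLinearMap.norm_smulRight_apply, innerSL_apply_norm, one_mul]⟩
  have main : ∀ p : Euc d, ∃ D : (Euc d) →L[ℝ] ((Euc d) →L[ℝ] (Euc d)), HasFDerivAt f D p ∧
      ‖D‖ ≤ 8 * Real.exp (-1) * Real.sqrt t := by
    intro p
    have h1 : HasFDerivAt (fun p : Euc d => x - p) (-(ContinuousLinearMap.id ℝ (Euc d))) p :=
      (hasFDerivAt_id p).const_sub x
    have hnsq : HasFDerivAt (fun p : Euc d => ‖x - p‖ ^ 2)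
        ((2 : ℕ) • (innerSL ℝ (x - p)).comp (-(ContinuousLinearMap.id ℝ (Euc d)))) p :=
      h1.norm_sq
    have hscalar : HasFDerivAt (fun p : Euc d => -‖x - p‖ ^ 2 / (4 * t))
        ((4 * t)⁻¹ •
          (-((2 : ℕ) • (innerSL ℝ (x - p)).comp (-(ContinuousLinearMap.id ℝ (Euc d)))))) p := by
      simpa [div_eq_mul_inv] using hnsq.neg.mul_const ((4 * t)⁻¹)
    have hexp := hscalar.exp
    have hA0 := (hB.hasFDerivAt (x - p, x - p)).comp p (h1.prodMk h1)
    have hA : HasFDerivAt (fun p : Euc d => (innerSL ℝ (x - p)).smulRight (x - p))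
        ((hB.deriv (x - p, x - p)).comp
          ((-(ContinuousLinearMap.id ℝ (Euc d))).prod (-(ContinuousLinearMap.id ℝ (Euc d))))) p :=
      hA0
    refine ⟨_, hexp.smul hA, ?_⟩
    set u := x - p with hu
    set c := Real.exp (-‖u‖ ^ 2 / (4 * t)) with hc
    have hc0 : 0 < c := Real.exp_pos _
    set r := ‖u‖ with hr
    have hr0 : 0 ≤ r := norm_nonneg u
    have hDA : ‖(hB.deriv (u, u)).comp
        ((-(ContinuousLinearMap.id ℝ (Euc d))).prod (-(ContinuousLinearMap.id ℝ (Euc d))))‖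
        ≤ 2 * r := by
      apply ContinuousLinearMap.opNorm_le_bound _ (by positivity)
      intro h
      have happ : ((hB.deriv (u, u)).comp
          ((-(ContinuousLinearMap.id ℝ (Euc d))).prod (-(ContinuousLinearMap.id ℝ (Euc d))))) h
          = (innerSL ℝ u).smulRight (-h) + (innerSL ℝ (-h)).smulRight u := by
        simp [hB.deriv_apply]
      rw [happ]
      calc ‖(innerSL ℝ u).smulRight (-h) + (innerSL ℝ (-h)).smulRight u‖
          ≤ ‖(innerSL ℝ u).smulRight (-h)‖ + ‖(innerSL ℝ (-h)).smulRight u‖ := norm_add_le _ _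
        _ = r * ‖h‖ + ‖h‖ * r := by
            simp [ContinuousLinearMap.norm_smulRight_apply, innerSL_apply_norm, hr]
        _ = 2 * r * ‖h‖ := by ring
    have hDs : ‖(4 * t)⁻¹ •
        (-((2 : ℕ) • (innerSL ℝ u).comp (-(ContinuousLinearMap.id ℝ (Euc d)))))‖
        ≤ r / (2 * t) := by
      apply ContinuousLinearMap.opNorm_le_bound _ (by positivity)
      intro h
      have happ : (((4 * t)⁻¹ •
          (-((2 : ℕ) • (innerSL ℝ u).comp (-(ContinuousLinearMap.id ℝ (Euc d)))))) h)
          = (4 * t)⁻¹ * ((2 : ℝ) * inner ℝ u h) := by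
        simp
      rw [happ]
      have hih : |(inner ℝ u h : ℝ)| ≤ r * ‖h‖ := abs_real_inner_le_norm u h
      rw [Real.norm_eq_abs, abs_mul, abs_mul]
      have h4t : |(4 * t)⁻¹| = (4 * t)⁻¹ := abs_of_pos (by positivity)
      rw [h4t, abs_two]
      calc (4 * t)⁻¹ * (2 * |(inner ℝ u h : ℝ)|) ≤ (4 * t)⁻¹ * (2 * (r * ‖h‖)) := by
            apply mul_le_mul_of_nonneg_left _ (by positivity)
            exact mul_le_mul_of_nonneg_left hih (by norm_num)
        _ = r / (2 * t) * ‖h‖ := by field_simp; ring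
    have hAu : ‖(innerSL ℝ u).smulRight u‖ = r ^ 2 := by
      rw [ContinuousLinearMap.norm_smulRight_apply, innerSL_apply_norm, sq]
    calc ‖c • ((hB.deriv (u, u)).comp
            ((-(ContinuousLinearMap.id ℝ (Euc d))).prod (-(ContinuousLinearMap.id ℝ (Euc d)))))
          + (c • (4 * t)⁻¹ •
            (-((2 : ℕ) • (innerSL ℝ u).comp
              (-(ContinuousLinearMap.id ℝ (Euc d)))))).smulRight
            ((innerSL ℝ u).smulRight u)‖
        ≤ c * (2 * r) + c * (r / (2 * t)) * r ^ 2 := by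
          refine (norm_add_le _ _).trans (add_le_add ?_ ?_)
          · refine le_trans (norm_smul_le c ((hB.deriv (u, u)).comp
              ((-(ContinuousLinearMap.id ℝ (Euc d))).prod (-(ContinuousLinearMap.id ℝ (Euc d)))))) ?_
            rw [Real.norm_eq_abs, abs_of_pos hc0]
            exact mul_le_mul_of_nonneg_left hDA hc0.le
          · rw [ContinuousLinearMap.norm_smulRight_apply, hAu]
            apply mul_le_mul_of_nonneg_right _ (sq_nonneg r)
            refine le_trans (norm_smul_le c
              ((4 * t)⁻¹ •
                (-((2 : ℕ) • (innerSL ℝ u).comp (-(ContinuousLinearMap.id ℝ (Euc d))))))) ?_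
            rw [Real.norm_eq_abs, abs_of_pos hc0]
            exact mul_le_mul_of_nonneg_left hDs hc0.le
      _ = Real.exp (-r ^ 2 / (4 * t)) * (2 * r + r ^ 3 / (2 * t)) := by
          rw [hc]; ring
      _ ≤ 8 * Real.exp (-1) * Real.sqrt t := key2 r t hr0 ht
  choose D hD hDle using main
  have hest := Convex.norm_image_sub_le_of_norm_hasFDerivWithin_le
    (f := f) (f' := D) (s := Set.univ)
    (fun y _ => (hD y).hasFDerivWithinAt) (fun y _ => hDle y) convex_univ
    (Set.mem_univ q) (Set.mem_univ p)
  exact hest
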